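/- arXiv:1401.1263 — 2 statements merged into one kernel-verified Lean document; each statement's English description precedes it below -/
import Mathlib

section
/- Let G be a graph of order N with c connected components, r of which are isolated vertices. Then NEE(G) ≥ (N-c) e^{(c-r)/(N-c)} + c e^{-1}. -/
open Matrix BigOperators
open scoped Classical

noncomputable def normLap {V : Type*} [Fintype V] (G : SimpleGraph V) : Matrix V V ℝ :=
  letI : DecidableRel G.Adj := Classical.decRel _
  let Dh : Matrix V V ℝ := Matrix.diagonal (fun v => (Real.sqrt (G.degree v))⁻¹)
  Dh * (Matrix.diagonal (fun v => ((G.degree v : ℝ))) - G.adjMatrix ℝ) * Dh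

noncomputable def NEE {V : Type*} [Fintype V] [DecidableEq V] (G : SimpleGraph V)
    (hL : (normLap G).IsHermitian) : ℝ :=
  ∑ i, Real.exp (hL.eigenvalues i - 1)

theorem normLap_eq' {V : Type*} [Fintype V] [DecidableEq V] (G : SimpleGraph V)
    [inst : DecidableRel G.Adj] :
    normLap G = Matrix.diagonal (fun v => (Real.sqrt (G.degree v))⁻¹) *
      (Matrix.diagonal (fun v => ((G.degree v : ℝ))) - G.adjMatrix ℝ) *
      Matrix.diagonal (fun v => (Real.sqrt (G.degree v))⁻¹) := by
  have hinst : (Classical.decRel G.Adj : DecidableRel G.Adj) = inst := Subsingleton.elim _ _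
  unfold normLap
  rw [hinst]
  congr!

lemma sum_eigs_eq_trace' {n : Type*} [Fintype n] [DecidableEq n] {A : Matrix n n ℝ}
    (hA : A.IsHermitian) : ∑ i, hA.eigenvalues i = A.trace := by
  conv_rhs => rw [hA.spectral_theorem]
  rw [Unitary.conjStarAlgAut_apply, Matrix.trace_mul_cycle, Matrix.mem_unitaryGroup_iff'.mp (hA.eigenvectorUnitary).2, one_mul,
    Matrix.trace_diagonal]
  simp

lemma trace_normLap' {V : Type*} [Fintype V] [DecidableEq V] (G : SimpleGraph V)
    [DecidableRel G.Adj] :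
    (normLap G).trace = ∑ v : V, (if G.degree v = 0 then (0:ℝ) else 1) := by
  rw [normLap_eq', Matrix.trace]
  congr 1
  ext v
  by_cases h : G.degree v = 0
  · simp [Matrix.diag, Matrix.mul_apply, Matrix.diagonal, h]
  · have hd : (0:ℝ) < (G.degree v : ℝ) := by positivity
    have hs : Real.sqrt (G.degree v) ≠ 0 := by positivity
    simp only [Matrix.diag, Matrix.mul_diagonal, Matrix.diagonal_mul, Matrix.sub_apply,
      Matrix.diagonal_apply_eq, SimpleGraph.adjMatrix_apply, if_neg h]
    rw [if_neg (G.irrefl)]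
    field_simp
    rw [sub_zero, Real.sq_sqrt hd.le]

lemma normLap_mulVec_comp' {V : Type*} [Fintype V] [DecidableEq V] (G : SimpleGraph V)
    [DecidableRel G.Adj] (K : G.ConnectedComponent) :
    normLap G *ᵥ (fun v => if G.connectedComponentMk v = K then
      (if G.degree v = 0 then (1:ℝ) else Real.sqrt (G.degree v)) else 0) = 0 := by
  rw [normLap_eq', ← Matrix.mulVec_mulVec, ← Matrix.mulVec_mulVec]
  have h1 : (Matrix.diagonal (fun v => (Real.sqrt (G.degree v))⁻¹) *ᵥ
      (fun v => if G.connectedComponentMk v = K then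
      (if G.degree v = 0 then (1:ℝ) else Real.sqrt (G.degree v)) else 0)) =
      (fun v => if G.connectedComponentMk v = K ∧ G.degree v ≠ 0 then (1:ℝ) else 0) := by
    ext v
    rw [Matrix.mulVec_diagonal]
    by_cases hK : G.connectedComponentMk v = K
    · by_cases h0 : G.degree v = 0
      · simp [hK, h0]
      · have hs : Real.sqrt (G.degree v) ≠ 0 := by
          have : (0:ℝ) < (G.degree v : ℝ) := by positivity
          positivity
        simp [hK, h0, inv_mul_cancel₀ hs]
    · simp [hK]
  rw [h1]
  have h2 : ((Matrix.diagonal (fun v => ((G.degree v : ℝ))) - G.adjMatrix ℝ) *ᵥ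
      (fun v => if G.connectedComponentMk v = K ∧ G.degree v ≠ 0 then (1:ℝ) else 0)) = 0 := by
    ext v
    rw [Matrix.sub_mulVec, Pi.sub_apply, Matrix.mulVec_diagonal,
      SimpleGraph.adjMatrix_mulVec_apply, Pi.zero_apply]
    have hsum : ∑ u ∈ G.neighborFinset v,
        (if G.connectedComponentMk u = K ∧ G.degree u ≠ 0 then (1:ℝ) else 0) =
        if G.connectedComponentMk v = K then (G.degree v : ℝ) else 0 := by
      by_cases hK : G.connectedComponentMk v = K
      · rw [if_pos hK]
        rw [Finset.sum_congr rfl (fun u hu => ?_), Finset.sum_const, nsmul_eq_mul, mul_one,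
          SimpleGraph.card_neighborFinset_eq_degree]
        have hadj : G.Adj v u := (SimpleGraph.mem_neighborFinset _ _ _).mp hu
        have hcu : G.connectedComponentMk u = K := by
          rw [← hK]; exact SimpleGraph.ConnectedComponent.sound hadj.symm.reachable
        have hdu : G.degree u ≠ 0 :=
          Nat.pos_iff_ne_zero.mp ((G.degree_pos_iff_exists_adj u).mpr ⟨v, hadj.symm⟩)
        rw [if_pos ⟨hcu, hdu⟩]
      · rw [if_neg hK]
        refine Finset.sum_eq_zero (fun u hu => ?_)
        have hadj : G.Adj v u := (SimpleGraph.mem_neighborFinset _ _ _).mp hu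
        have hcu : G.connectedComponentMk u ≠ K := by
          rw [← SimpleGraph.ConnectedComponent.sound hadj.symm.reachable] at hK
          exact hK
        simp [hcu]
    rw [hsum]
    by_cases hK : G.connectedComponentMk v = K
    · by_cases h0 : G.degree v = 0
      · simp [hK, h0]
      · simp [hK, h0]
    · simp [hK]
  rw [h2, Matrix.mulVec_zero]

lemma normLap_li {N : ℕ} (G : SimpleGraph (Fin N)) [DecidableRel G.Adj]
    (A : Matrix (Fin N) (Fin N) ℝ)
    (x : G.ConnectedComponent → (Fin N → ℝ))
    (hx : ∀ K, x K = fun v => if G.connectedComponentMk v = K then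
      (if G.degree v = 0 then (1:ℝ) else Real.sqrt (G.degree v)) else 0)
    (hker : ∀ K, x K ∈ LinearMap.ker A.mulVecLin) :
    LinearIndependent ℝ (fun K => (⟨x K, hker K⟩ : LinearMap.ker A.mulVecLin)) := by
  rw [Fintype.linearIndependent_iff]
  intro g hg K
  obtain ⟨w, hw⟩ : ∃ w, G.connectedComponentMk w = K := Quot.exists_rep K
  have hg' : ∑ K', g K' • x K' = 0 := by
    have := congrArg Subtype.val hg
    simpa using this
  have hev := congrFun hg' w
  simp only [Finset.sum_apply, Pi.smul_apply, smul_eq_mul, Pi.zero_apply] at hev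
  rw [Finset.sum_eq_single K
    (fun K' _ hne => by simp only [hx, hw]; rw [if_neg (fun h => hne h.symm)]; ring)
    (by simp)] at hev
  set f : ℝ := if G.degree w = 0 then (1:ℝ) else Real.sqrt (G.degree w) with hf
  have hfne : f ≠ 0 := by
    by_cases h0 : G.degree w = 0
    · simp [hf, h0]
    · have : (0:ℝ) < (G.degree w : ℝ) := by positivity
      simp only [hf, if_neg h0]
      positivity
  simp only [hx] at hev
  rw [if_pos hw] at hev
  rcases mul_eq_zero.mp hev with h | h
  · exact h
  · exact absurd h hfne

/-- If G has order N, c connected components, r of which are isolated vertices,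
then NEE ≥ (N-c)e^{(c-r)/(N-c)} + c e^{-1}. -/
theorem NEE_lower_bound_general {N c r : ℕ} (G : SimpleGraph (Fin N))
    [DecidableRel G.Adj]
    (hc : Nat.card G.ConnectedComponent = c)
    (hr : Nat.card {v : Fin N // G.degree v = 0} = r)
    (hcN : c < N) (hL : (normLap G).IsHermitian) :
    NEE G hL ≥ ((N : ℝ) - c) * Real.exp (((c : ℝ) - r) / ((N : ℝ) - c)) +
      (c : ℝ) * Real.exp (-1) := by
  -- kernel vectors
  have hker : ∀ K : G.ConnectedComponent,
      (fun v => if G.connectedComponentMk v = K then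
        (if G.degree v = 0 then (1:ℝ) else Real.sqrt (G.degree v)) else 0)
        ∈ LinearMap.ker (normLap G).mulVecLin := fun K => by
    rw [LinearMap.mem_ker, Matrix.mulVecLin_apply]
    exact normLap_mulVec_comp' G K
  have li := normLap_li G (normLap G) _ (fun K => rfl) hker
  have hfin : Fintype.card G.ConnectedComponent = c := by
    rw [← Nat.card_eq_fintype_card, hc]
  have hkerge : c ≤ Module.finrank ℝ (LinearMap.ker (normLap G).mulVecLin) := by
    have := li.fintype_card_le_finrank
    omega
  have hrankker : (normLap G).rank + Module.finrank ℝ (LinearMap.ker (normLap G).mulVecLin)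
      = N := by
    rw [Matrix.rank, LinearMap.finrank_range_add_finrank_ker (normLap G).mulVecLin]
    simp
  have hcount : (Finset.univ.filter (fun i => hL.eigenvalues i = 0)).card
      + (normLap G).rank = N := by
    rw [hL.rank_eq_card_non_zero_eigs, Fintype.card_subtype]
    rw [Finset.card_filter_add_card_filter_not]
    simp
  have hzero : c ≤ (Finset.univ.filter (fun i => hL.eigenvalues i = 0)).card := by omega
  obtain ⟨S, hSsub, hScard⟩ := Finset.exists_subset_card_eq hzero
  have hSzero : ∀ i ∈ S, hL.eigenvalues i = 0 := fun i hi =>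
    (Finset.mem_filter.mp (hSsub hi)).2
  -- trace
  have hrcard : (Finset.univ.filter (fun v : Fin N => G.degree v = 0)).card = r := by
    rw [← Fintype.card_subtype, ← Nat.card_eq_fintype_card, hr]
  have htr : ∑ i, hL.eigenvalues i = (N:ℝ) - r := by
    rw [sum_eigs_eq_trace' hL, trace_normLap' G]
    have : ∀ v : Fin N, (if G.degree v = 0 then (0:ℝ) else 1) =
        1 - (if G.degree v = 0 then (1:ℝ) else 0) := by
      intro v; by_cases h : G.degree v = 0 <;> simp [h]
    rw [Finset.sum_congr rfl (fun v _ => this v), Finset.sum_sub_distrib, Finset.sum_const,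
      Finset.sum_boole, hrcard]
    simp
  have hSsum : ∑ i ∈ S, hL.eigenvalues i = 0 := Finset.sum_eq_zero hSzero
  have htot := Finset.sum_add_sum_compl S hL.eigenvalues
  have hSc : ∑ i ∈ Sᶜ, hL.eigenvalues i = (N:ℝ) - r := by
    rw [htr] at htot; rw [hSsum] at htot; linarith
  set m : ℝ := (N:ℝ) - c with hmdef
  have hm : 0 < m := by
    rw [hmdef]
    have : (c:ℝ) < N := Nat.cast_lt.mpr hcN
    linarith
  have hmcard : ((Sᶜ.card : ℕ) : ℝ) = m := by
    rw [Finset.card_compl, hScard, Fintype.card_fin, Nat.cast_sub hcN.le]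
  -- Jensen
  have h1 : ∑ _i ∈ Sᶜ, (1/m) = 1 := by
    rw [Finset.sum_const, nsmul_eq_mul, hmcard]
    field_simp
  have jens := convexOn_exp.map_sum_le (t := Sᶜ) (w := fun _ => 1/m)
    (p := fun i => hL.eigenvalues i - 1)
    (fun i _ => by positivity) h1 (fun i _ => Set.mem_univ _)
  have hexp : ∑ i ∈ Sᶜ, (1/m) • (hL.eigenvalues i - 1) = ((c:ℝ) - r)/m := by
    simp only [smul_eq_mul]
    rw [← Finset.mul_sum, Finset.sum_sub_distrib, hSc, Finset.sum_const, nsmul_eq_mul,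
      mul_one, hmcard]
    field_simp
    ring
  rw [hexp] at jens
  simp only [smul_eq_mul] at jens
  have hsum2 : ∑ i ∈ Sᶜ, (1/m) * Real.exp (hL.eigenvalues i - 1) =
      (1/m) * ∑ i ∈ Sᶜ, Real.exp (hL.eigenvalues i - 1) := by
    rw [Finset.mul_sum]
  rw [hsum2] at jens
  have hjens : m * Real.exp (((c:ℝ) - r)/m) ≤ ∑ i ∈ Sᶜ, Real.exp (hL.eigenvalues i - 1) := by
    have := mul_le_mul_of_nonneg_left jens hm.le
    rw [← mul_assoc] at this
    field_simp at this
    linarith [this]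
  -- S part
  have hSpart : ∑ i ∈ S, Real.exp (hL.eigenvalues i - 1) = c * Real.exp (-1) := by
    rw [Finset.sum_congr rfl (fun i hi => by rw [hSzero i hi]), Finset.sum_const,
      hScard, nsmul_eq_mul]
    norm_num
  unfold NEE
  rw [← Finset.sum_add_sum_compl S, hSpart]
  linarith
end

section
/- The normalized Laplacian Estrada index of the disjoint union of c-r copies of K_s (s ≥ 2) and r isolated vertices equals c e^{-1} + (N-c) e^{(c-r)/(N-c)}, where N = (c-r)s + r. -/
open Matrix BigOperators
open scoped Classical

/-- Disjoint union of k copies of the complete graph K_s together with r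
isolated vertices. -/
def unionKs (k r s : ℕ) : SimpleGraph (Fin k × Fin s ⊕ Fin r) :=
  SimpleGraph.fromRel (fun x y => ∃ i a b, x = Sum.inl (i, a) ∧ y = Sum.inl (i, b))

/-! ### Auxiliary lemmas -/

lemma trace_eq_sum_eigenvalues' {n : Type*} [Fintype n] [DecidableEq n] (A : Matrix n n ℝ)
    (hA : A.IsHermitian) : A.trace = ∑ i, hA.eigenvalues i := by
  simpa using hA.trace_eq_sum_eigenvalues

lemma sum_ite_one {n : ℕ} (a : Fin n) (x y : ℝ) :
    ∑ c : Fin n, (if c = a then x else y) = x + ((n : ℝ) - 1) * y := by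
  have h : ∀ c : Fin n, (if c = a then x else y) = y + (if c = a then x - y else 0) := by
    intro c; split_ifs <;> ring
  simp_rw [h, Finset.sum_add_distrib, Finset.sum_const, Finset.sum_ite_eq' Finset.univ a]
  simp only [Finset.card_univ, Fintype.card_fin, nsmul_eq_mul, Finset.mem_univ, if_true]
  ring

lemma sum_ite_two {n : ℕ} (a b : Fin n) (hab : a ≠ b) (x y z : ℝ) :
    ∑ c : Fin n, (if c = a then x else if c = b then y else z)
      = x + y + ((n : ℝ) - 2) * z := by
  have h : ∀ c : Fin n, (if c = a then x else if c = b then y else z)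
      = z + ((if c = a then x - z else 0) + (if c = b then y - z else 0)) := by
    intro c
    by_cases h1 : c = a
    · subst h1; rw [if_pos rfl, if_pos rfl, if_neg hab]; ring
    · by_cases h2 : c = b
      · subst h2; rw [if_neg h1, if_pos rfl, if_neg h1, if_pos rfl]; ring
      · rw [if_neg h1, if_neg h2, if_neg h1, if_neg h2]; ring
  simp_rw [h, Finset.sum_add_distrib, Finset.sum_const,
    Finset.sum_ite_eq' Finset.univ a, Finset.sum_ite_eq' Finset.univ b]
  simp only [Finset.card_univ, Fintype.card_fin, nsmul_eq_mul, Finset.mem_univ, if_true]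
  ring

section aux

variable (k r s : ℕ)

lemma unionKs_adj_inl (i j : Fin k) (a b : Fin s) :
    (unionKs k r s).Adj (Sum.inl (i, a)) (Sum.inl (j, b)) ↔ i = j ∧ a ≠ b := by
  rw [unionKs, SimpleGraph.fromRel_adj]
  constructor
  · rintro ⟨hne, h | h⟩
    · obtain ⟨i', a', b', h1, h2⟩ := h
      simp only [Sum.inl.injEq, Prod.mk.injEq] at h1 h2
      obtain ⟨rfl, rfl⟩ := h1
      obtain ⟨rfl, rfl⟩ := h2
      exact ⟨rfl, fun hab => hne (by rw [hab])⟩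
    · obtain ⟨i', a', b', h1, h2⟩ := h
      simp only [Sum.inl.injEq, Prod.mk.injEq] at h1 h2
      obtain ⟨rfl, rfl⟩ := h1
      obtain ⟨rfl, rfl⟩ := h2
      exact ⟨rfl, fun hab => hne (by rw [hab])⟩
  · rintro ⟨rfl, hab⟩
    exact ⟨by simp [hab], Or.inl ⟨i, a, b, rfl, rfl⟩⟩

lemma unionKs_not_adj_inr (x : Fin k × Fin s ⊕ Fin r) (j : Fin r) :
    ¬ (unionKs k r s).Adj x (Sum.inr j) := by
  rintro ⟨hne, h | h⟩ <;> obtain ⟨i', a', b', h1, h2⟩ := h <;> simp_all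

lemma unionKs_not_adj_inr' (j : Fin r) (x : Fin k × Fin s ⊕ Fin r) :
    ¬ (unionKs k r s).Adj (Sum.inr j) x :=
  fun h => unionKs_not_adj_inr k r s _ _ h.symm

lemma unionKs_degree_inl (i : Fin k) (a : Fin s) :
    (unionKs k r s).degree (Sum.inl (i, a)) = s - 1 := by
  classical
  have hset : (unionKs k r s).neighborFinset (Sum.inl (i, a))
      = (Finset.univ.erase a).image
          (fun b => (Sum.inl (i, b) : Fin k × Fin s ⊕ Fin r)) := by
    ext x
    rcases x with ⟨j, b⟩ | t
    · simp [SimpleGraph.mem_neighborFinset, unionKs_adj_inl, Finset.mem_image,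
        Finset.mem_erase, eq_comm]
      aesop
    · simp [SimpleGraph.mem_neighborFinset, unionKs_not_adj_inr]
  rw [SimpleGraph.degree, hset, Finset.card_image_of_injective _
    (fun b1 b2 h => by simpa using h), Finset.card_erase_of_mem (Finset.mem_univ a)]
  simp

lemma unionKs_degree_inr (j : Fin r) :
    (unionKs k r s).degree (Sum.inr j) = 0 := by
  classical
  rw [SimpleGraph.degree, Finset.card_eq_zero, Finset.eq_empty_iff_forall_notMem]
  intro x hx
  rw [SimpleGraph.mem_neighborFinset] at hx
  exact unionKs_not_adj_inr' k r s j x hx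

/-- Explicit form of the normalized Laplacian of `unionKs`. -/
noncomputable def Mks : Matrix (Fin k × Fin s ⊕ Fin r) (Fin k × Fin s ⊕ Fin r) ℝ :=
  fun x y => match x, y with
  | Sum.inl (i, a), Sum.inl (j, b) =>
      if i = j then (if a = b then 1 else -((s : ℝ) - 1)⁻¹) else 0
  | _, _ => 0

lemma Mks_inl_inl (i j : Fin k) (a b : Fin s) :
    Mks k r s (Sum.inl (i, a)) (Sum.inl (j, b))
      = if i = j then (if a = b then 1 else -((s : ℝ) - 1)⁻¹) else 0 := rfl

lemma Mks_inr_right (x : Fin k × Fin s ⊕ Fin r) (j : Fin r) :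
    Mks k r s x (Sum.inr j) = 0 := by rcases x with ⟨i, a⟩ | t <;> rfl

lemma Mks_inr_left (j : Fin r) (y : Fin k × Fin s ⊕ Fin r) :
    Mks k r s (Sum.inr j) y = 0 := by rcases y with ⟨i, a⟩ | t <;> rfl

lemma normLap_apply {V : Type*} [Fintype V] (G : SimpleGraph V) (x y : V) :
    normLap G x y =
      (Real.sqrt (G.degree x))⁻¹ *
        ((if x = y then (G.degree x : ℝ) else 0)
          - (if G.Adj x y then 1 else 0)) * (Real.sqrt (G.degree y))⁻¹ := by
  classical
  simp [normLap, Matrix.mul_diagonal, Matrix.diagonal_mul, Matrix.sub_apply,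
    Matrix.diagonal_apply, SimpleGraph.adjMatrix_apply]

lemma normLap_unionKs (hs : 2 ≤ s) : normLap (unionKs k r s) = Mks k r s := by
  have hs2 : (2 : ℝ) ≤ (s : ℝ) := by exact_mod_cast hs
  have hu0 : (0 : ℝ) < (s : ℝ) - 1 := by linarith
  have hcast : ((s - 1 : ℕ) : ℝ) = (s : ℝ) - 1 := by
    rw [Nat.cast_sub (by omega)]; simp
  have hsq : Real.sqrt ((s : ℝ) - 1) ≠ 0 := by positivity
  have hmul : Real.sqrt ((s : ℝ) - 1) * Real.sqrt ((s : ℝ) - 1) = (s : ℝ) - 1 :=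
    Real.mul_self_sqrt hu0.le
  ext x y
  rw [normLap_apply]
  rcases x with ⟨i, a⟩ | t
  · rcases y with ⟨j, b⟩ | u
    · simp only [unionKs_degree_inl, hcast, Mks_inl_inl]
      by_cases hij : i = j
      · subst hij
        by_cases hab : a = b
        · subst hab
          rw [if_pos rfl, if_pos rfl, if_pos rfl,
            if_neg (by rw [unionKs_adj_inl]; tauto)]
          field_simp
          linear_combination -hmul
        · rw [if_pos rfl, if_neg hab, if_neg (by simp [Prod.ext_iff, hab]),
            if_pos (by rw [unionKs_adj_inl]; exact ⟨rfl, hab⟩)]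
          field_simp
          linear_combination hmul
      · rw [if_neg hij, if_neg (by simp [Prod.ext_iff, hij]),
          if_neg (by rw [unionKs_adj_inl]; tauto)]
        ring
    · rw [Mks_inr_right, if_neg (by simp), if_neg (unionKs_not_adj_inr k r s _ u)]
      ring
  · rw [Mks_inr_left, unionKs_degree_inr,
      if_neg (unionKs_not_adj_inr' k r s t y)]
    rcases y with ⟨j, b⟩ | u <;> simp

lemma Mks_sq (hs : 2 ≤ s) :
    Mks k r s * Mks k r s = ((s : ℝ) / ((s : ℝ) - 1)) • Mks k r s := by
  have hs2 : (2 : ℝ) ≤ (s : ℝ) := by exact_mod_cast hs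
  have hu : (s : ℝ) - 1 ≠ 0 := by linarith
  ext x y
  rw [Matrix.mul_apply, Matrix.smul_apply, smul_eq_mul]
  rcases x with ⟨i, a⟩ | t
  · rcases y with ⟨j, b⟩ | u
    · rw [Fintype.sum_sum_type]
      have h2 : ∑ t : Fin r,
          Mks k r s (Sum.inl (i, a)) (Sum.inr t) * Mks k r s (Sum.inr t) (Sum.inl (j, b)) = 0 := by
        simp [Mks_inr_right]
      rw [h2, add_zero, Fintype.sum_prod_type, Mks_inl_inl]
      by_cases hij : i = j
      · subst hij
        rw [if_pos rfl]
        rw [Finset.sum_eq_single i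
          (fun i' _ hi' => by
            apply Finset.sum_eq_zero
            intro c _
            rw [Mks_inl_inl, if_neg (fun h => hi' h.symm), zero_mul])
          (by simp)]
        simp only [Mks_inl_inl, eq_self_iff_true, if_true]
        by_cases hab : a = b
        · subst hab
          have hpt : ∀ c : Fin s,
              (if a = c then (1:ℝ) else -((s : ℝ) - 1)⁻¹) *
                (if c = a then (1:ℝ) else -((s : ℝ) - 1)⁻¹)
              = (if c = a then (1:ℝ) else ((s : ℝ) - 1)⁻¹ * ((s : ℝ) - 1)⁻¹) := by
            intro c
            rcases eq_or_ne c a with h | h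
            · subst h; norm_num
            · rw [if_neg (fun hh => h hh.symm), if_neg h, if_neg h]; ring
          simp_rw [hpt]
          rw [sum_ite_one, if_true]
          field_simp
          ring
        · have hpt : ∀ c : Fin s,
              (if a = c then (1:ℝ) else -((s : ℝ) - 1)⁻¹) *
                (if c = b then (1:ℝ) else -((s : ℝ) - 1)⁻¹)
              = (if c = a then -((s : ℝ) - 1)⁻¹ else if c = b then -((s : ℝ) - 1)⁻¹
                  else ((s : ℝ) - 1)⁻¹ * ((s : ℝ) - 1)⁻¹) := by
            intro c
            rcases eq_or_ne c a with h | h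
            · subst h
              rw [if_pos rfl, if_pos rfl, if_neg hab, one_mul]
            · rw [if_neg (fun hh => h hh.symm), if_neg h]
              rcases eq_or_ne c b with h2 | h2
              · subst h2; rw [if_pos rfl, if_pos rfl, mul_one]
              · rw [if_neg h2, if_neg h2]; ring
          simp_rw [hpt]
          rw [sum_ite_two _ _ (fun h => hab h) _ _ _, if_neg hab]
          field_simp
          ring
      · rw [if_neg hij, mul_zero]
        apply Finset.sum_eq_zero
        intro i' _
        apply Finset.sum_eq_zero
        intro c _
        rw [Mks_inl_inl, Mks_inl_inl]
        by_cases h1 : i = i'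
        · rw [if_neg (fun h2 => hij (h1.trans h2)), mul_zero]
        · rw [if_neg h1, zero_mul]
    · rw [Mks_inr_right, mul_zero]
      apply Finset.sum_eq_zero
      intro z _
      rw [Mks_inr_right, mul_zero]
  · rw [Mks_inr_left, mul_zero]
    apply Finset.sum_eq_zero
    intro z _
    rw [Mks_inr_left, zero_mul]

end aux

theorem unionKs_NEE_aux (k r s N c : ℕ) (hk1 : 1 ≤ k) (hs : 2 ≤ s)
    (hN : N = k * s + r) (hc : c = k + r)
    (hL : (normLap (unionKs k r s)).IsHermitian) :
    NEE (unionKs k r s) hL =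
      (c : ℝ) * Real.exp (-1) +
        ((N : ℝ) - c) * Real.exp (((c : ℝ) - r) / ((N : ℝ) - c)) := by
  classical
  have hs2 : (2 : ℝ) ≤ (s : ℝ) := by exact_mod_cast hs
  have hu : (s : ℝ) - 1 ≠ 0 := by linarith
  have hs0 : (s : ℝ) ≠ 0 := by linarith
  have hkne : (k : ℝ) ≠ 0 := by
    have : (1 : ℝ) ≤ (k : ℝ) := by exact_mod_cast hk1
    linarith
  have hcR : (c : ℝ) = (k : ℝ) + (r : ℝ) := by exact_mod_cast hc
  have hNR : (N : ℝ) = (k : ℝ) * (s : ℝ) + (r : ℝ) := by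
    rw [hN]; push_cast; ring
  set α : ℝ := (s : ℝ) / ((s : ℝ) - 1) with hα
  have hM : normLap (unionKs k r s) = Mks k r s := normLap_unionKs k r s hs
  have hM2 : Mks k r s * Mks k r s = α • Mks k r s := Mks_sq k r s hs
  -- dichotomy of eigenvalues
  have hdich : ∀ i, hL.eigenvalues i = 0 ∨ hL.eigenvalues i = α := by
    intro i
    set lam := hL.eigenvalues i with hlam
    set v := ⇑(hL.eigenvectorBasis i) with hv
    have hv0 : v ≠ 0 := by
      intro h
      apply hL.eigenvectorBasis.orthonormal.ne_zero i
      ext x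
      exact congrFun h x
    have h1 : normLap (unionKs k r s) *ᵥ v = lam • v := hL.mulVec_eigenvectorBasis i
    have h2 : (normLap (unionKs k r s) * normLap (unionKs k r s)) *ᵥ v = (lam * lam) • v := by
      rw [← Matrix.mulVec_mulVec, h1, Matrix.mulVec_smul, h1, smul_smul]
    have h3 : (normLap (unionKs k r s) * normLap (unionKs k r s)) *ᵥ v = (α * lam) • v := by
      rw [hM, hM2, Matrix.smul_mulVec, ← hM, h1, smul_smul]
    obtain ⟨x, hx⟩ : ∃ x, v x ≠ 0 := by
      by_contra h
      push_neg at h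
      exact hv0 (funext h)
    have h4 := congrFun (h2.symm.trans h3) x
    simp only [Pi.smul_apply, smul_eq_mul] at h4
    have h5 : lam * lam = α * lam := mul_right_cancel₀ hx h4
    have h6 : lam * (lam - α) = 0 := by linear_combination h5
    rcases mul_eq_zero.1 h6 with h | h
    · exact Or.inl h
    · exact Or.inr (by linarith [sub_eq_zero.1 h])
  set T := Finset.univ.filter (fun i => hL.eigenvalues i = α) with hT
  set Tc := Finset.univ.filter (fun i => ¬ hL.eigenvalues i = α) with hTc
  have hgen : ∀ f : ℝ → ℝ,
      ∑ i, f (hL.eigenvalues i) = (T.card : ℝ) * f α + (Tc.card : ℝ) * f 0 := by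
    intro f
    rw [← Finset.sum_filter_add_sum_filter_not Finset.univ
      (fun i => hL.eigenvalues i = α) (fun i => f (hL.eigenvalues i))]
    congr 1
    · rw [Finset.sum_congr rfl (fun i hi => by rw [(Finset.mem_filter.1 hi).2]),
        Finset.sum_const, nsmul_eq_mul]
    · rw [Finset.sum_congr rfl (fun i hi => by
        rcases hdich i with h | h
        · rw [h]
        · exact absurd h (Finset.mem_filter.1 hi).2),
        Finset.sum_const, nsmul_eq_mul]
  -- trace computation
  have htr : (Mks k r s).trace = (k : ℝ) * (s : ℝ) := by
    rw [Matrix.trace, Fintype.sum_sum_type]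
    have e1 : ∀ p : Fin k × Fin s, (Mks k r s).diag (Sum.inl p) = 1 := by
      rintro ⟨i, a⟩
      simp [Matrix.diag, Mks_inl_inl]
    have e2 : ∀ t : Fin r, (Mks k r s).diag (Sum.inr t) = 0 := by
      intro t
      simp [Matrix.diag, Mks_inr_right]
    simp_rw [e1, e2]
    simp [Finset.card_univ]
  have hsum : ∑ i, hL.eigenvalues i = (k : ℝ) * (s : ℝ) := by
    rw [← trace_eq_sum_eigenvalues' _ hL, hM, htr]
  have hsum2 : (T.card : ℝ) * α + (Tc.card : ℝ) * 0 = (k : ℝ) * (s : ℝ) := by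
    rw [← hgen (fun x => x)]; exact hsum
  have hTcard : (T.card : ℝ) = (k : ℝ) * ((s : ℝ) - 1) := by
    rw [mul_zero, add_zero, hα] at hsum2
    field_simp at hsum2
    nlinarith [hsum2, hs0]
  have hcards : T.card + Tc.card = N := by
    rw [hT, hTc, Finset.card_filter_add_card_filter_not, Finset.card_univ]
    rw [Fintype.card_sum, Fintype.card_prod, Fintype.card_fin, Fintype.card_fin,
      Fintype.card_fin, hN]
  have hTccard : (Tc.card : ℝ) = (c : ℝ) := by
    have hNc : (T.card : ℝ) + (Tc.card : ℝ) = (N : ℝ) := by exact_mod_cast hcards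
    rw [hTcard, hNR] at hNc
    rw [hcR]
    linarith [hNc]
  have hTcard2 : (T.card : ℝ) = (N : ℝ) - (c : ℝ) := by
    rw [hTcard, hNR, hcR]; ring
  -- final computation
  have hNEE : NEE (unionKs k r s) hL
      = (T.card : ℝ) * Real.exp (α - 1) + (Tc.card : ℝ) * Real.exp (0 - 1) :=
    hgen (fun x => Real.exp (x - 1))
  rw [hNEE, hTccard, hTcard2]
  have hexp : α - 1 = ((c : ℝ) - (r : ℝ)) / ((N : ℝ) - (c : ℝ)) := by
    have hNc : (N : ℝ) - (c : ℝ) = (k : ℝ) * ((s : ℝ) - 1) := by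
      rw [hNR, hcR]; ring
    have hcr : (c : ℝ) - (r : ℝ) = (k : ℝ) := by rw [hcR]; ring
    rw [hNc, hcr, hα]
    field_simp
    ring
  rw [hexp, zero_sub]
  try ring

/-- NEE of the disjoint union of c-r copies of K_s and r isolated vertices
equals c e^{-1} + (N-c)e^{(c-r)/(N-c)} with N = (c-r)s + r. -/
theorem unionKs_NEE (c r s N : ℕ) (hrc : r < c) (hs : 2 ≤ s)
    (hN : N = (c - r) * s + r)
    (hL : (normLap (unionKs (c - r) r s)).IsHermitian) :
    NEE (unionKs (c - r) r s) hL =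
      (c : ℝ) * Real.exp (-1) +
        ((N : ℝ) - c) * Real.exp (((c : ℝ) - r) / ((N : ℝ) - c)) := by
  exact unionKs_NEE_aux (c - r) r s N c (by omega) hs hN (by omega) hL
end
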